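/- arXiv:1403.6015 — 4 statements merged into one kernel-verified Lean document; each statement's English description precedes it below -/
import Mathlib

section
/- Invertibility criterion for block matrices with low-rank off-diagonal blocks: let A be an invertible m×m real matrix, B an invertible n×n real matrix, U an m×p real matrix, and V an n×p real matrix. Then the block matrix [[A, U·Vᵀ], [V·Uᵀ, B]] is invertible if and only if the p×p matrix I_p − (Uᵀ·A⁻¹·U)·(Vᵀ·B⁻¹·V) is invertible. -/
open Matrix

theorem isUnit_block_lowrank_offdiag_iff (m n p : ℕ)
    (A : Matrix (Fin m) (Fin m) ℝ) (B : Matrix (Fin n) (Fin n) ℝ)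
    (U : Matrix (Fin m) (Fin p) ℝ) (V : Matrix (Fin n) (Fin p) ℝ)
    (hA : IsUnit A) (hB : IsUnit B) :
    IsUnit (Matrix.fromBlocks A (U * Vᵀ) (V * Uᵀ) B) ↔
      IsUnit ((1 : Matrix (Fin p) (Fin p) ℝ) - (Uᵀ * A⁻¹ * U) * (Vᵀ * B⁻¹ * V)) := by
  have hAd := (Matrix.isUnit_iff_isUnit_det A).mp hA
  have hBd := (Matrix.isUnit_iff_isUnit_det B).mp hB
  haveI : Invertible A := A.invertibleOfIsUnitDet hAd
  haveI : Invertible B := B.invertibleOfIsUnitDet hBd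
  rw [Matrix.isUnit_iff_isUnit_det, Matrix.isUnit_iff_isUnit_det,
    Matrix.det_fromBlocks₁₁]
  have hsplit : B - V * Uᵀ * ⅟A * (U * Vᵀ)
      = B * (1 + (B⁻¹ * (V * (Uᵀ * A⁻¹ * U))) * (-Vᵀ)) := by
    rw [Matrix.invOf_eq_nonsing_inv]
    have hB1 : B * B⁻¹ = 1 := Matrix.mul_nonsing_inv B hBd
    rw [Matrix.mul_add, Matrix.mul_one]
    rw [show B * (B⁻¹ * (V * (Uᵀ * A⁻¹ * U)) * (-Vᵀ))
        = (B * B⁻¹) * (V * (Uᵀ * A⁻¹ * U) * (-Vᵀ)) by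
        simp [Matrix.mul_assoc], hB1,
      Matrix.one_mul]
    simp [sub_eq_add_neg, Matrix.mul_neg, Matrix.mul_assoc]
  rw [hsplit, Matrix.det_mul, Matrix.det_one_add_mul_comm]
  have h2 : (1 : Matrix (Fin p) (Fin p) ℝ) + (-Vᵀ) * (B⁻¹ * (V * (Uᵀ * A⁻¹ * U)))
      = 1 + (Vᵀ * B⁻¹ * V) * (-(Uᵀ * A⁻¹ * U)) := by
        simp [Matrix.mul_assoc]
  rw [h2, Matrix.det_one_add_mul_comm]
  have h3 : (1 : Matrix (Fin p) (Fin p) ℝ) + (-(Uᵀ * A⁻¹ * U)) * (Vᵀ * B⁻¹ * V)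
      = 1 - (Uᵀ * A⁻¹ * U) * (Vᵀ * B⁻¹ * V) := by
        rw [sub_eq_add_neg, Matrix.neg_mul]
  rw [h3]
  simp [IsUnit.mul_iff, hAd, hBd, hAd.ne_zero, hBd.ne_zero]
end

section
/- Nonnegativity of the Gaussian process predictive variance: let K be an n×n real symmetric matrix, v ∈ ℝⁿ, and c ∈ ℝ such that the (n+1)×(n+1) bordered block matrix [[K, v], [vᵀ, c]] is positive semidefinite, and let σ be a nonzero real number. Then σ²·I_n + K is invertible and c − vᵀ·(σ²·I_n + K)⁻¹·v ≥ 0. -/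
open Matrix

theorem gp_predictive_variance_nonneg (n : ℕ)
    (K : Matrix (Fin n) (Fin n) ℝ) (v : Fin n → ℝ) (c : ℝ)
    (hKsymm : Kᵀ = K)
    (hPSD : (Matrix.fromBlocks K (Matrix.replicateCol (Fin 1) v) (Matrix.replicateRow (Fin 1) v)
        (Matrix.of fun _ _ => c)).PosSemidef)
    (σ : ℝ) (hσ : σ ≠ 0) :
    IsUnit (σ ^ 2 • (1 : Matrix (Fin n) (Fin n) ℝ) + K) ∧
      0 ≤ c - v ⬝ᵥ (σ ^ 2 • (1 : Matrix (Fin n) (Fin n) ℝ) + K)⁻¹.mulVec v := by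
  have hσ2 : (0:ℝ) < σ ^ 2 := by positivity
  have hK : K.PosSemidef := by
    have := hPSD.submatrix (Sum.inl : Fin n → Fin n ⊕ Fin 1)
    convert this using 1; ext i j; rfl
  have hSI : (σ ^ 2 • (1 : Matrix (Fin n) (Fin n) ℝ)).PosDef := by
    refine Matrix.PosDef.of_dotProduct_mulVec_pos ?_ fun x hx => ?_
    · simp [Matrix.IsHermitian]
    · have hxx : 0 < x ⬝ᵥ x := by
        simpa using Matrix.dotProduct_self_star_pos_iff.2 hx
      simp only [smul_mulVec, one_mulVec, dotProduct_smul, smul_eq_mul,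
        RCLike.star_def, star_trivial]
      positivity
  have hA : (σ ^ 2 • (1 : Matrix (Fin n) (Fin n) ℝ) + K).PosDef := hSI.add_posSemidef hK
  set A := σ ^ 2 • (1 : Matrix (Fin n) (Fin n) ℝ) + K with hAdef
  refine ⟨hA.isUnit, ?_⟩
  have hInv := hA.isUnit.invertible
  set w := A⁻¹.mulVec v with hw
  have hAw : A.mulVec w = v := by
    rw [hw, mulVec_mulVec, Matrix.mul_nonsing_inv _ (isUnit_iff_isUnit_det _ |>.1 hA.isUnit),
      one_mulVec]
  have hq := hPSD.dotProduct_mulVec_nonneg (Sum.elim (-w) (fun _ => 1))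
  simp only [fromBlocks_mulVec, sumElim_dotProduct_sumElim, RCLike.star_def, star_trivial,
    Sum.elim_comp_inl, Sum.elim_comp_inr] at hq
  -- compute the pieces
  have hq' : 0 ≤ w ⬝ᵥ K.mulVec w - 2 * (v ⬝ᵥ w) + c := by
    have h1 : (Matrix.replicateCol (Fin 1) v).mulVec (fun _ => 1) = v := by
      ext i; simp [mulVec, dotProduct]
    have h2 : (Matrix.replicateRow (Fin 1) v).mulVec (-w) = fun _ => -(v ⬝ᵥ w) := by
      ext i; simp [mulVec, dotProduct]
    have h3 : (Matrix.of fun (_ : Fin 1) (_ : Fin 1) => c).mulVec (fun _ : Fin 1 => (1:ℝ)) = fun _ : Fin 1 => c := by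
      ext i; simp [mulVec, dotProduct]
    rw [h1, h2, h3] at hq
    have h4 : (-w) ⬝ᵥ (K.mulVec (-w) + v) = w ⬝ᵥ K.mulVec w - w ⬝ᵥ v := by
      simp [dotProduct_add, mulVec_neg]; ring
    rw [h4] at hq
    have h5 : (fun _ : Fin 1 => (1:ℝ)) ⬝ᵥ ((fun _ => -(v ⬝ᵥ w)) + fun _ => c)
        = -(v ⬝ᵥ w) + c := by simp [dotProduct]
    rw [h5] at hq
    have := dotProduct_comm w v
    linarith [hq]
  have hKA : w ⬝ᵥ K.mulVec w ≤ v ⬝ᵥ w := by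
    have h0 : 0 ≤ w ⬝ᵥ (σ ^ 2 • (1 : Matrix (Fin n) (Fin n) ℝ)).mulVec w := by
      have : (σ ^ 2 • (1 : Matrix (Fin n) (Fin n) ℝ)).mulVec w = σ ^ 2 • w := by
        simp [smul_mulVec]
      rw [this, dotProduct_smul]
      have : (0:ℝ) ≤ w ⬝ᵥ w := by
        simpa using dotProduct_self_star_nonneg w
      positivity
    have : w ⬝ᵥ A.mulVec w = w ⬝ᵥ (σ ^ 2 • (1 : Matrix (Fin n) (Fin n) ℝ)).mulVec w
        + w ⬝ᵥ K.mulVec w := by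
      rw [hAdef]; simp [add_mulVec, dotProduct_add]
    rw [hAw, dotProduct_comm] at this
    linarith
  linarith
end

section
/- Hermite expansion of the Gaussian kernel (the identity underlying the fast Gauss transform): define h_j(x) = (−1)^j · (d/dx)^j e^{−x²} (the j-th Hermite function, i.e., h_j(x) = e^{−x²} H_j(x) with H_j the physicists' Hermite polynomial). Then for all real s, t, s₀ and every δ > 0, e^{−(t−s)²/δ} = Σ_{j=0}^∞ (1/j!) · ((s − s₀)/√δ)^j · h_j((t − s₀)/√δ), where the series converges. -/
/-- The `j`-th Hermite function `h_j(x) = (−1)^j (d/dx)^j e^{−x²}`. -/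
noncomputable def hermiteFun (j : ℕ) (x : ℝ) : ℝ :=
  (-1 : ℝ) ^ j * iteratedDeriv j (fun u : ℝ => Real.exp (-u ^ 2)) x

private lemma entireGauss : Differentiable ℂ (fun z : ℂ => Complex.exp (-z ^ 2)) :=
  (Complex.differentiable_exp).comp ((differentiable_id.pow 2).neg)

private lemma contDiffGauss : ContDiff ℂ ⊤ (fun z : ℂ => Complex.exp (-z ^ 2)) :=
  Complex.contDiff_exp.comp ((contDiff_id.pow 2).neg)

private lemma iteratedDeriv_gauss_real (n : ℕ) (x : ℝ) :
    iteratedDeriv n (fun z : ℂ => Complex.exp (-z ^ 2)) (x : ℂ) =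
      ((iteratedDeriv n (fun u : ℝ => Real.exp (-u ^ 2)) x : ℝ) : ℂ) := by
  induction n generalizing x with
  | zero =>
    simp only [iteratedDeriv_zero]
    rw [Complex.ofReal_exp]
    norm_cast
  | succ n ih =>
    have hdiff : Differentiable ℂ (iteratedDeriv n (fun z : ℂ => Complex.exp (-z ^ 2))) :=
      contDiffGauss.differentiable_iteratedDeriv n
        (by exact_mod_cast WithTop.coe_lt_top (n : ℕ∞))
    set F := iteratedDeriv n (fun z : ℂ => Complex.exp (-z ^ 2)) with hF
    have hD : HasDerivAt F (deriv F (x : ℂ)) (x : ℂ) := (hdiff (x : ℂ)).hasDerivAt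
    have hre : HasDerivAt (fun y : ℝ => (F (y : ℂ)).re) (deriv F (x : ℂ)).re x :=
      hD.real_of_complex
    have heq : (fun y : ℝ => (F (y : ℂ)).re) =
        iteratedDeriv n (fun u : ℝ => Real.exp (-u ^ 2)) := by
      funext y; rw [ih y]; simp
    have him : (F (x : ℂ)).im = 0 := by rw [ih x]; simp
    -- imaginary part of deriv is 0 since F is real on ℝ:
    have hIm : HasDerivAt (fun y : ℝ => F (y : ℂ)) (deriv F (x : ℂ)) x := hD.comp_ofReal
    have hReF : (fun y : ℝ => F (y : ℂ)) =
        fun y : ℝ => ((iteratedDeriv n (fun u : ℝ => Real.exp (-u ^ 2)) y : ℝ) : ℂ) := by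
      funext y; exact ih y
    rw [hReF] at hIm
    rw [heq] at hre
    have hreal : deriv F (x : ℂ) = (((deriv F (x : ℂ)).re : ℝ) : ℂ) :=
      hIm.unique hre.ofReal_comp
    rw [iteratedDeriv_succ, iteratedDeriv_succ, ← hF, hre.deriv]
    exact hreal

theorem hermite_expansion_gaussian_kernel (s t s₀ δ : ℝ) (hδ : 0 < δ) :
    HasSum
      (fun j : ℕ =>
        (1 / (j.factorial : ℝ)) * ((s - s₀) / Real.sqrt δ) ^ j *
          hermiteFun j ((t - s₀) / Real.sqrt δ))
      (Real.exp (-(t - s) ^ 2 / δ)) := by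
  have hδ' : Real.sqrt δ ≠ 0 := ne_of_gt (Real.sqrt_pos.mpr hδ)
  set c : ℝ := (t - s₀) / Real.sqrt δ
  set z : ℝ := (t - s) / Real.sqrt δ
  have hsum := Complex.hasSum_taylorSeries_of_entire entireGauss (c : ℂ) (z : ℂ)
  have hzc : (z : ℂ) - (c : ℂ) = -((((s - s₀) / Real.sqrt δ : ℝ)) : ℂ) := by
    rw [show -((((s - s₀) / Real.sqrt δ : ℝ)) : ℂ) = ((-(s - s₀) / Real.sqrt δ : ℝ) : ℂ) by
      push_cast; ring]
    push_cast
    simp only [c, z]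
    push_cast
    ring
  -- rewrite each term to be ofReal of the real term
  have hterm : ∀ j : ℕ,
      ((j.factorial : ℂ))⁻¹ • ((z : ℂ) - (c : ℂ)) ^ j •
        iteratedDeriv j (fun w : ℂ => Complex.exp (-w ^ 2)) (c : ℂ) =
      (((1 / (j.factorial : ℝ)) * ((s - s₀) / Real.sqrt δ) ^ j * hermiteFun j c : ℝ) : ℂ) := by
    intro j
    rw [hzc, iteratedDeriv_gauss_real j c, neg_pow]
    simp only [smul_eq_mul, hermiteFun]
    push_cast
    ring
  rw [funext hterm] at hsum
  have hval : Complex.exp (-(z : ℂ) ^ 2) = ((Real.exp (-(t - s) ^ 2 / δ) : ℝ) : ℂ) := by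
    have hz2 : (z : ℝ) ^ 2 = (t - s) ^ 2 / δ := by
      rw [div_pow, Real.sq_sqrt hδ.le]
    rw [Complex.ofReal_exp]
    norm_cast
    rw [hz2]
    ring_nf
  rw [hval] at hsum
  exact Complex.hasSum_ofReal.mp hsum
end

section
/- The exponential (Ornstein–Uhlenbeck) covariance kernel yields full-rank covariance matrices: if x₁, …, xₙ are pairwise distinct real numbers, then the n×n matrix K with entries K_{ij} = exp(−|xᵢ − xⱼ|) is positive definite; in particular K is invertible (has full rank). -/
open Matrix Finset

theorem exponential_kernel_posDef (n : ℕ) (x : Fin n → ℝ)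
    (hx : Function.Injective x) :
    (Matrix.of fun i j : Fin n => Real.exp (-|x i - x j|)).PosDef := by
  classical
  set a : Fin n → ℝ := fun i => Real.exp (x i) with ha_def
  have ha_pos : ∀ i, 0 < a i := fun i => Real.exp_pos _
  have ha_inj : Function.Injective a := fun i j h => hx (Real.exp_injective h)
  set σ : Equiv.Perm (Fin n) := Tuple.sort a with hσ_def
  set s : Fin n → ℝ := fun k => a (σ k) with hs_def
  have hs_mono : StrictMono s :=
    (Tuple.monotone_sort a).strictMono_of_injective (ha_inj.comp σ.injective)
  have hs_pos : ∀ k, 0 < s k := fun k => ha_pos _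
  -- previous value (0 for the first index)
  set p : Fin n → ℝ := fun k =>
    if h : 0 < (k : ℕ) then s ⟨(k : ℕ) - 1, by omega⟩ else 0 with hp_def
  have hp_nonneg : ∀ k, 0 ≤ p k := by
    intro k
    simp only [hp_def]
    split
    · exact (hs_pos _).le
    · exact le_rfl
  have hp_lt : ∀ k, p k < s k := by
    intro k
    simp only [hp_def]
    split
    · exact hs_mono (by simp [Fin.lt_def]; omega)
    · exact hs_pos k
  have hΔ_pos : ∀ k, 0 < s k ^ 2 - p k ^ 2 := by
    intro k
    have h1 := hp_nonneg k
    have h2 := hp_lt k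
    nlinarith
  set B : Matrix (Fin n) (Fin n) ℝ :=
    Matrix.of (fun k i => if s k ≤ a i then Real.sqrt (s k ^ 2 - p k ^ 2) / a i else 0)
    with hB_def
  -- telescoping helper
  set f : ℕ → ℝ := fun m => if h : 0 < m ∧ m ≤ n then s ⟨m - 1, by omega⟩ ^ 2 else 0
    with hf_def
  have hf_succ : ∀ k : Fin n, f ((k : ℕ) + 1) = s k ^ 2 := by
    intro k
    have hk := k.isLt
    simp only [hf_def]
    rw [dif_pos ⟨Nat.succ_pos _, by omega⟩]
    congr 1
  have hf_self : ∀ k : Fin n, f (k : ℕ) = p k ^ 2 := by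
    intro k
    have hk := k.isLt
    simp only [hf_def, hp_def]
    by_cases h : 0 < (k : ℕ)
    · rw [dif_pos ⟨h, by omega⟩, dif_pos h]
    · rw [dif_neg (by omega), dif_neg h]
      norm_num
  -- telescoping sum
  have htel : ∀ i : Fin n,
      (∑ k : Fin n, if s k ≤ a i then s k ^ 2 - p k ^ 2 else 0) = a i ^ 2 := by
    intro i
    set r : Fin n := σ.symm i with hr_def
    have hsr : s r = a i := by simp [hs_def, hr_def]
    have hcond : ∀ k : Fin n, (s k ≤ a i) ↔ (k : ℕ) ≤ (r : ℕ) := by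
      intro k
      rw [← hsr, hs_mono.le_iff_le, Fin.le_def]
    have step1 : (∑ k : Fin n, if s k ≤ a i then s k ^ 2 - p k ^ 2 else 0)
        = ∑ k : Fin n, (fun m : ℕ => if m ≤ (r : ℕ) then f (m + 1) - f m else 0) (k : ℕ) := by
      refine Finset.sum_congr rfl fun k _ => ?_
      simp only [hcond k, hf_succ k, hf_self k]
    rw [step1, Fin.sum_univ_eq_sum_range (fun m : ℕ => if m ≤ (r : ℕ) then f (m + 1) - f m else 0) n]
    have hsub : Finset.range ((r : ℕ) + 1) ⊆ Finset.range n := by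
      apply Finset.range_subset_range.2
      have := r.isLt
      omega
    rw [← Finset.sum_subset hsub (fun m _ hm => by
      rw [if_neg]
      intro hle
      exact hm (Finset.mem_range.2 (by omega)))]
    have : (∑ m ∈ Finset.range ((r : ℕ) + 1),
        if m ≤ (r : ℕ) then f (m + 1) - f m else 0)
        = ∑ m ∈ Finset.range ((r : ℕ) + 1), (f (m + 1) - f m) := by
      refine Finset.sum_congr rfl fun m hm => ?_
      rw [if_pos]
      exact Nat.lt_succ_iff.mp (Finset.mem_range.mp hm)
    rw [this, Finset.sum_range_sub f ((r : ℕ) + 1)]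
    have hf0 : f 0 = 0 := by simp [hf_def]
    rw [hf0, sub_zero]
    have : f ((r : ℕ) + 1) = s r ^ 2 := hf_succ r
    rw [this, hsr]
  -- the Gram identity for one ordering
  have hgram : ∀ i j : Fin n, a i ≤ a j →
      (∑ k : Fin n, B k i * B k j) = Real.exp (-|x i - x j|) := by
    intro i j hij
    have hxij : x i ≤ x j := by
      have := hij
      simpa [ha_def, Real.exp_le_exp] using this
    have hterm : ∀ k : Fin n, B k i * B k j
        = (if s k ≤ a i then s k ^ 2 - p k ^ 2 else 0) / (a i * a j) := by
      intro k
      simp only [hB_def, Matrix.of_apply]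
      by_cases h : s k ≤ a i
      · rw [if_pos h, if_pos (h.trans hij), if_pos h]
        rw [div_mul_div_comm, Real.mul_self_sqrt (hΔ_pos k).le]
      · rw [if_neg h, if_neg h, zero_mul, zero_div]
    rw [Finset.sum_congr rfl (fun k _ => hterm k), ← Finset.sum_div, htel i]
    have habs : |x i - x j| = x j - x i := by
      rw [abs_sub_comm, abs_of_nonneg (by linarith)]
    rw [habs, neg_sub, Real.exp_sub]
    have : a i ^ 2 / (a i * a j) = a i / a j := by
      field_simp
    rw [this]
  -- K = Bᴴ * B
  have key : (Matrix.of fun i j : Fin n => Real.exp (-|x i - x j|)) = Bᴴ * B := by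
    ext i j
    rw [Matrix.mul_apply]
    simp only [Matrix.conjTranspose_apply, star_trivial, Matrix.of_apply]
    rcases le_total (a i) (a j) with h | h
    · exact (hgram i j h).symm
    · rw [abs_sub_comm]
      rw [← hgram j i h]
      exact Finset.sum_congr rfl fun k _ => mul_comm _ _
  -- B has nonzero determinant
  have hdetB : B.det ≠ 0 := by
    have htri : (B.submatrix id ⇑σ).BlockTriangular id := by
      intro k l hlt
      simp only [Matrix.submatrix_apply, id_eq, hB_def, Matrix.of_apply]
      rw [if_neg]
      exact not_le.2 (hs_mono hlt)
    have hdet' : (B.submatrix id ⇑σ).det = ∏ k : Fin n, B k (σ k) :=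
      Matrix.det_of_upperTriangular htri
    have hdiag : ∀ k : Fin n, B k (σ k) ≠ 0 := by
      intro k
      simp only [hB_def, Matrix.of_apply]
      rw [if_pos le_rfl]
      exact div_ne_zero (Real.sqrt_ne_zero'.2 (hΔ_pos k)).symm.symm (hs_pos k).ne'
    have hprod : (∏ k : Fin n, B k (σ k)) ≠ 0 :=
      Finset.prod_ne_zero_iff.2 fun k _ => hdiag k
    have hperm : (B.submatrix id ⇑σ).det = (Equiv.Perm.sign σ : ℝ) * B.det :=
      Matrix.det_permute' σ B
    have hne : ((Equiv.Perm.sign σ : ℤ) : ℝ) * B.det ≠ 0 := by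
      rw [← hperm, hdet']
      exact hprod
    intro h0
    rw [h0, mul_zero] at hne
    exact hne rfl
  have hpsd : (Bᴴ * B).PosSemidef := Matrix.posSemidef_conjTranspose_mul_self B
  rw [key, Matrix.posDef_iff_dotProduct_mulVec]
  refine ⟨hpsd.1, fun v hv => ?_⟩
  have hnonneg := (Matrix.posSemidef_iff_dotProduct_mulVec.1 hpsd).2 v
  rcases lt_or_eq_of_le hnonneg with h | h
  · exact h
  · exfalso
    have hzero : (Bᴴ * B) *ᵥ v = 0 := (hpsd.dotProduct_mulVec_zero_iff v).1 h.symm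
    have hunit : IsUnit (Bᴴ * B).det := by
      rw [Matrix.det_mul, Matrix.det_conjTranspose]
      exact (IsUnit.mul (isUnit_iff_ne_zero.2 (by simpa using hdetB))
        (isUnit_iff_ne_zero.2 hdetB))
    have hinj := Matrix.mulVec_injective_iff_isUnit.2
      ((Matrix.isUnit_iff_isUnit_det _).2 hunit)
    apply hv
    apply hinj
    rw [hzero, Matrix.mulVec_zero]
end
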